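/- Let 0 < λ ≤ 1/2. For every g ∈ C₀(ℝ), the set Γ_g := { f ∈ C₀(ℝ) : |f(m)| ≥ |g(m)| for all m ∈ ℤ } is not σ-λ-porous in C₀(ℝ); that is, Γ_g is not a countable union of λ-porous subsets of C₀(ℝ). -/

import Mathlib

open scoped ZeroAtInfty

/-- For `0 < λ < 1`, a subset `E` of a metric space is *λ-porous at* `x ∈ E` if for each
`δ > 0` there is `y ∈ B(x; δ) \ {x}` with `B(y; λ·d(x,y)) ∩ E = ∅`. -/
def IsPorousAt {X : Type*} [MetricSpace X] (lam : ℝ) (E : Set X) (x : X) : Prop :=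
  ∀ δ > 0, ∃ y ∈ Metric.ball x δ, y ≠ x ∧ Metric.ball y (lam * dist x y) ∩ E = ∅

/-- `E` is *λ-porous* if it is λ-porous at each of its points. -/
def IsPorous {X : Type*} [MetricSpace X] (lam : ℝ) (E : Set X) : Prop :=
  ∀ x ∈ E, IsPorousAt lam E x

/-- `E` is *σ-λ-porous* if it is a countable union of λ-porous subsets. -/
def IsSigmaPorous {X : Type*} [MetricSpace X] (lam : ℝ) (E : Set X) : Prop :=
  ∃ S : ℕ → Set X, (∀ n, IsPorous lam (S n)) ∧ E = ⋃ n, S n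

open Filter Metric Topology


noncomputable def phase (ζ : ℂ) : ℂ := if ζ = 0 then 1 else ζ / (‖ζ‖ : ℂ)

lemma abs_phase (ζ : ℂ) : ‖phase ζ‖ = 1 := by
  by_cases h : ζ = 0
  · simp [phase, h]
  · have hr : (0:ℝ) < ‖ζ‖ := norm_pos_iff.mpr h
    simp [phase, h, map_div₀, Complex.norm_real, Real.norm_eq_abs, abs_of_nonneg hr.le, div_self hr.ne']

noncomputable def tent (x : ℝ) : ℝ := max 0 (1 - 2 * |x - round x|)

lemma tent_nonneg (x : ℝ) : 0 ≤ tent x := le_max_left _ _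
lemma tent_le_one (x : ℝ) : tent x ≤ 1 := by
  apply max_le (by norm_num)
  have := abs_nonneg (x - round x); linarith

noncomputable def wfun (c : ℤ → ℝ) (u : ℤ → ℂ) (x : ℝ) : ℂ :=
  ((c (round x) * tent x : ℝ) : ℂ) * u (round x)

lemma abs_wfun (c : ℤ → ℝ) (u : ℤ → ℂ) (hc0 : ∀ m, 0 ≤ c m)
    (hu : ∀ m, ‖u m‖ = 1) (x : ℝ) :
    ‖wfun c u x‖ = c (round x) * tent x := by
  rw [wfun, norm_mul, hu, mul_one, Complex.norm_real, Real.norm_eq_abs]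
  exact abs_of_nonneg (mul_nonneg (hc0 _) (tent_nonneg x))

lemma norm_wfun_le (c : ℤ → ℝ) (u : ℤ → ℂ) (hc0 : ∀ m, 0 ≤ c m)
    (hu : ∀ m, ‖u m‖ = 1) (x : ℝ) :
    ‖wfun c u x‖ ≤ c (round x) := by
  rw [abs_wfun c u hc0 hu]
  calc c (round x) * tent x ≤ c (round x) * 1 :=
        mul_le_mul_of_nonneg_left (tent_le_one x) (hc0 _)
    _ = c (round x) := mul_one _

lemma half_int_dist (x₀ : ℝ) (h : |x₀ - round x₀| = 1/2) (n : ℤ) : 1/2 ≤ |x₀ - n| := by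
  rcases abs_eq (by norm_num : (0:ℝ) ≤ 1/2) |>.mp h with h' | h'
  · have heq : x₀ - n = ((round x₀ - n : ℤ) : ℝ) + 1/2 := by push_cast; linarith
    rw [heq]
    rcases le_or_gt 0 (round x₀ - n : ℤ) with hj | hj
    · have : (0:ℝ) ≤ ((round x₀ - n : ℤ) : ℝ) := by exact_mod_cast hj
      rw [abs_of_nonneg (by linarith)]; linarith
    · have h1 : (round x₀ - n : ℤ) ≤ -1 := by omega
      have : ((round x₀ - n : ℤ) : ℝ) ≤ -1 := by exact_mod_cast h1
      rw [abs_of_nonpos (by linarith)]; linarith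
  · have heq : x₀ - n = ((round x₀ - n : ℤ) : ℝ) - 1/2 := by push_cast; linarith
    rw [heq]
    rcases le_or_gt 1 (round x₀ - n : ℤ) with hj | hj
    · have : (1:ℝ) ≤ ((round x₀ - n : ℤ) : ℝ) := by exact_mod_cast hj
      rw [abs_of_nonneg (by linarith)]; linarith
    · have h1 : (round x₀ - n : ℤ) ≤ 0 := by omega
      have : ((round x₀ - n : ℤ) : ℝ) ≤ 0 := by exact_mod_cast h1
      rw [abs_of_nonpos (by linarith)]; linarith

lemma continuous_wfun (c : ℤ → ℝ) (u : ℤ → ℂ) (s : ℝ) (hc0 : ∀ m, 0 ≤ c m)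
    (hcs : ∀ m, c m ≤ s) (hu : ∀ m, ‖u m‖ = 1) :
    Continuous (wfun c u) := by
  have hs0 : 0 ≤ s := le_trans (hc0 0) (hcs 0)
  rw [continuous_iff_continuousAt]
  intro x₀
  by_cases h : |x₀ - round x₀| = 1/2
  · -- half-integer point: wfun x₀ = 0, squeeze
    have hw0 : wfun c u x₀ = 0 := by
      have : tent x₀ = 0 := by
        rw [tent, h]; norm_num
      simp [wfun, this]
    rw [ContinuousAt, hw0]
    rw [Metric.tendsto_nhds]
    intro ε hε
    rw [Metric.eventually_nhds_iff]
    refine ⟨ε / (2 * s + 1), by positivity, ?_⟩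
    intro x hx
    have hb1 : 1/2 ≤ |x₀ - round x| := half_int_dist x₀ h (round x)
    have hb2 : |x₀ - round x| - |x - x₀| ≤ |x - round x| := by
      have := abs_sub_abs_le_abs_sub (x₀ - (round x : ℝ)) (x₀ - x)
      have h2 : (x₀ - round x) - (x₀ - x) = x - round x := by ring
      rw [h2] at this
      have h3 : |x₀ - x| = |x - x₀| := abs_sub_comm _ _
      linarith [this]
    have htb : tent x ≤ 2 * |x - x₀| := by
      apply max_le (by positivity)
      linarith
    have hdx : |x - x₀| < ε / (2 * s + 1) := by
      rw [Real.dist_eq] at hx; exact hx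
    calc dist (wfun c u x) 0 = ‖wfun c u x‖ := by
          rw [dist_zero_right]
      _ = c (round x) * tent x := abs_wfun c u hc0 hu x
      _ ≤ s * (2 * |x - x₀|) := by
          apply mul_le_mul (hcs _) htb (tent_nonneg x) hs0
      _ < ε := by
          rw [lt_div_iff₀ (by positivity : (0:ℝ) < 2 * s + 1)] at hdx
          nlinarith [abs_nonneg (x - x₀)]
  · have hlt : |x₀ - round x₀| < 1/2 := lt_of_le_of_ne (abs_sub_round x₀) h
    set m := round x₀ with hm
    have hx1 : (m:ℝ) - 1/2 < x₀ := by
      have := abs_lt.mp hlt; linarith [this.1]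
    have hx2 : x₀ < (m:ℝ) + 1/2 := by
      have := abs_lt.mp hlt; linarith [this.2]
    have hG : Continuous (fun x : ℝ => ((c m * max 0 (1 - 2 * |x - (m:ℝ)|) : ℝ) : ℂ) * u m) := by
      apply Continuous.mul _ continuous_const
      apply Complex.continuous_ofReal.comp
      apply Continuous.mul continuous_const
      apply Continuous.max continuous_const
      apply Continuous.sub continuous_const
      apply Continuous.mul continuous_const
      exact (continuous_id.sub continuous_const).abs
    apply hG.continuousAt.congr
    apply Filter.eventuallyEq_of_mem (Ioo_mem_nhds hx1 hx2)
    intro x hx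
    have hround : round x = m := by
      rw [round_eq, Int.floor_eq_iff]
      refine ⟨by linarith [hx.1], by linarith [hx.2]⟩
    simp only [wfun, tent, hround]

lemma wfun_zero_at_infty (c : ℤ → ℝ) (u : ℤ → ℂ) (hc0 : ∀ m, 0 ≤ c m)
    (hu : ∀ m, ‖u m‖ = 1)
    (hten : Tendsto c (cocompact ℤ) (𝓝 0)) :
    Tendsto (wfun c u) (cocompact ℝ) (𝓝 0) := by
  rw [Metric.tendsto_nhds]
  intro ε hε
  rw [cocompact_eq_cofinite] at hten
  have hfin : {m : ℤ | ¬ dist (c m) 0 < ε}.Finite := by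
    have := Metric.tendsto_nhds.mp hten ε hε
    exact this
  obtain ⟨N, hN⟩ : ∃ N : ℕ, ∀ m ∈ hfin.toFinset, m.natAbs ≤ N :=
    ⟨hfin.toFinset.sup Int.natAbs, fun m hm => Finset.le_sup hm⟩
  rw [Filter.eventually_iff, mem_cocompact]
  refine ⟨Metric.closedBall 0 ((N:ℝ) + 1), isCompact_closedBall _ _, ?_⟩
  intro x hx
  simp only [Metric.mem_closedBall, not_le, Set.mem_compl_iff, dist_zero_right,
    Real.norm_eq_abs] at hx
  have hround : (N : ℝ) < |(round x : ℝ)| := by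
    have h1 : |x - round x| ≤ 1/2 := abs_sub_round x
    have h2 : |x| - |x - round x| ≤ |(round x:ℝ)| := by
      have := abs_sub_abs_le_abs_sub x (x - round x)
      have he : x - (x - round x) = (round x : ℝ) := by ring
      rw [he] at this; linarith
    linarith
  have hnotin : round x ∉ hfin.toFinset := by
    intro hmem
    have h1 := hN _ hmem
    have h2 : |(round x : ℝ)| ≤ (N:ℝ) := by
      have h3 : |round x| ≤ (N:ℤ) := by
        rw [Int.abs_eq_natAbs]; exact_mod_cast h1
      calc |(round x : ℝ)| = ((|round x| : ℤ) : ℝ) := by rw [Int.cast_abs]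
        _ ≤ ((N:ℤ):ℝ) := by exact_mod_cast h3
        _ = (N:ℝ) := by norm_cast
    linarith
  have hcx : dist (c (round x)) 0 < ε := by
    by_contra hcon
    exact hnotin (hfin.mem_toFinset.mpr hcon)
  show dist (wfun c u x) 0 < ε
  rw [dist_zero_right] at hcx ⊢
  calc ‖wfun c u x‖ = ‖wfun c u x‖ := rfl
    _ ≤ c (round x) := norm_wfun_le c u hc0 hu x
    _ ≤ |c (round x)| := le_abs_self _
    _ < ε := by rw [Real.norm_eq_abs] at hcx; exact hcx

example : True := trivial

lemma abs_add_phase (ζ : ℂ) (c : ℝ) (hc : 0 ≤ c) :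
    ‖ζ + (c : ℂ) * phase ζ‖ = ‖ζ‖ + c := by
  by_cases h : ζ = 0
  · simp [phase, h, abs_of_nonneg hc]
  · have hr : (0:ℝ) < ‖ζ‖ := norm_pos_iff.mpr h
    have hrne : (‖ζ‖ : ℂ) ≠ 0 := by exact_mod_cast hr.ne'
    have key : ζ + (c : ℂ) * phase ζ = ζ * (((‖ζ‖ + c) / ‖ζ‖ : ℝ) : ℂ) := by
      simp only [phase, if_neg h]
      push_cast
      field_simp
    rw [key, norm_mul]
    rw [Complex.norm_real, Real.norm_eq_abs, abs_of_nonneg (by positivity)]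
    field_simp

lemma surgery (y : C₀(ℝ, ℂ)) (c : ℤ → ℝ) (s : ℝ)
    (hc0 : ∀ m, 0 ≤ c m) (hcs : ∀ m, c m ≤ s)
    (hten : Tendsto c (cocompact ℤ) (𝓝 0)) :
    ∃ z : C₀(ℝ, ℂ), dist z y ≤ s ∧
      ∀ m : ℤ, ‖y (m:ℝ)‖ + c m ≤ ‖z (m:ℝ)‖ := by
  have hs0 : 0 ≤ s := le_trans (hc0 0) (hcs 0)
  set u : ℤ → ℂ := fun m => phase (y (m:ℝ)) with hu_def
  have hu : ∀ m, ‖u m‖ = 1 := fun m => abs_phase _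
  set W : C₀(ℝ, ℂ) :=
    ⟨⟨wfun c u, continuous_wfun c u s hc0 hcs hu⟩, wfun_zero_at_infty c u hc0 hu hten⟩ with hW
  have hWapp : ∀ x : ℝ, W x = wfun c u x := fun x => rfl
  refine ⟨y + W, ?_, ?_⟩
  · rw [dist_eq_norm, add_sub_cancel_left]
    rw [← ZeroAtInftyContinuousMap.norm_toBCF_eq_norm]
    refine (BoundedContinuousFunction.norm_le hs0).2 (fun x => ?_)
    calc ‖W.toBCF x‖ = ‖wfun c u x‖ := rfl
      _ ≤ c (round x) := norm_wfun_le c u hc0 hu x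
      _ ≤ s := hcs _
  · intro m
    have happ : (y + W) ((m:ℤ):ℝ) = y (m:ℝ) + wfun c u (m:ℝ) := rfl
    have hwm : wfun c u ((m:ℤ):ℝ) = (c m : ℂ) * u m := by
      rw [wfun, round_intCast]
      have ht : tent ((m:ℤ):ℝ) = 1 := by simp [tent]
      rw [ht, mul_one]
    rw [happ, hwm]
    rw [abs_add_phase (y (m:ℝ)) (c m) (hc0 m)]


noncomputable section Main

variable (g : C₀(ℝ, ℂ))

def Gm (m : ℤ) : ℝ := ‖g (m:ℝ)‖

lemma Gm_nonneg (m : ℤ) : 0 ≤ Gm g m := norm_nonneg _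

lemma Gm_tendsto : Tendsto (fun m : ℤ => Gm g m) (cocompact ℤ) (𝓝 0) := by
  have h1 : Tendsto (fun x : ℝ => g x) (cocompact ℝ) (𝓝 0) := g.zero_at_infty'
  have h2 : Tendsto (fun m : ℤ => (m : ℝ)) (cocompact ℤ) (cocompact ℝ) := by
    rw [cocompact_eq_cofinite]
    exact Int.tendsto_coe_cofinite
  have h3 : Tendsto (fun m : ℤ => g ((m:ℤ):ℝ)) (cocompact ℤ) (𝓝 0) := h1.comp h2
  simpa [Gm] using h3.norm

lemma tendsto_of_le_Gm (c : ℤ → ℝ) (C : ℝ) (hc0 : ∀ m, 0 ≤ c m)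
    (hle : ∀ m, c m ≤ C * Gm g m) : Tendsto c (cocompact ℤ) (𝓝 0) := by
  apply squeeze_zero hc0 hle
  simpa using (Gm_tendsto g).const_mul C

def Dset (π : ℤ → ℝ) : Set C₀(ℝ, ℂ) :=
  {f | ∀ m : ℤ, Gm g m + π m ≤ ‖f (m:ℝ)‖}

/-- eval at an integer is 1-Lipschitz -/
lemma abs_apply_le (f h : C₀(ℝ, ℂ)) (m : ℤ) :
    ‖f (m:ℝ)‖ - dist f h ≤ ‖h (m:ℝ)‖ := by
  have h1 : dist (f (m:ℝ)) (h (m:ℝ)) ≤ dist f h := by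
    rw [← ZeroAtInftyContinuousMap.dist_toBCF_eq_dist]
    exact BoundedContinuousFunction.dist_coe_le_dist (f := f.toBCF) (g := h.toBCF) (m:ℝ)
  have h2 : ‖f (m:ℝ)‖ - ‖h (m:ℝ)‖ ≤ dist (f (m:ℝ)) (h (m:ℝ)) := by
    rw [Complex.dist_eq]
    exact norm_sub_norm_le _ _
  linarith

structure St (g : C₀(ℝ, ℂ)) where
  π : ℤ → ℝ
  xb : C₀(ℝ, ℂ)
  r : ℝ
  hr : 0 < r
  hr1 : r ≤ 1
  hπ0 : ∀ m, 0 ≤ π m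
  hπlow : ∀ m, min (2 * Gm g m) 1 ≤ π m
  hπup : ∃ C, 0 ≤ C ∧ ∀ m, π m ≤ C * Gm g m
  hmem : xb ∈ Dset g π

variable (lam : ℝ)

def Next (S : Set C₀(ℝ, ℂ)) (σ σ' : St g) : Prop :=
  (∀ m, σ.π m ≤ σ'.π m) ∧
  dist σ'.xb σ.xb ≤ 2 * σ.r ∧
  σ'.r ≤ σ.r / 4 ∧
  ((∃ v ρ, 0 < ρ ∧ ρ ≤ σ.r / 8 ∧ Metric.ball v ρ ∩ S = ∅ ∧
      dist σ'.xb v ≤ ρ / 4 ∧ σ'.r = ρ / 32) ∨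
    ((∀ v ∈ Dset g σ.π, dist v σ.xb < σ.r → ∀ ρ, 0 < ρ → ρ ≤ σ.r / 8 →
        (Metric.ball v ρ ∩ S).Nonempty) ∧
      (∀ m, σ.π m + min (σ.r / 8) (2 / lam * σ.π m) ≤ σ'.π m) ∧
      dist σ'.xb σ.xb ≤ σ.r / 8 ∧ σ'.r = σ.r / 4))

lemma exists_next (hlam0 : 0 < lam) (S : Set C₀(ℝ, ℂ)) (σ : St g) :
    ∃ σ', Next g lam S σ σ' := by
  obtain ⟨C, hC0, hCπ⟩ := σ.hπup
  have hlam' : 0 ≤ 2 / lam := by positivity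
  by_cases hcase : ∃ v, v ∈ Dset g σ.π ∧ dist v σ.xb < σ.r ∧
      ∃ ρ, 0 < ρ ∧ ρ ≤ σ.r / 8 ∧ Metric.ball v ρ ∩ S = ∅
  · -- KILL branch
    obtain ⟨v, hvD, hvdist, ρ, hρ0, hρr, hball⟩ := hcase
    set Δ : ℤ → ℝ := fun m => min (ρ / 4) (2 / lam * σ.π m) with hΔ
    have hΔ0 : ∀ m, 0 ≤ Δ m := fun m => le_min (by positivity) (mul_nonneg hlam' (σ.hπ0 m))
    set π' : ℤ → ℝ := fun m => σ.π m + Δ m with hπ'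
    set c : ℤ → ℝ := fun m => max 0 (Gm g m + π' m - ‖v (m:ℝ)‖) with hc
    have hc0 : ∀ m, 0 ≤ c m := fun m => le_max_left _ _
    have hcΔ : ∀ m, c m ≤ Δ m := by
      intro m
      apply max_le (hΔ0 m)
      have hv := hvD m
      simp only [hπ']
      linarith
    have hcs : ∀ m, c m ≤ ρ / 4 := fun m => (hcΔ m).trans (min_le_left _ _)
    have hten : Tendsto c (cocompact ℤ) (𝓝 0) := by
      apply tendsto_of_le_Gm g c (2 / lam * C) hc0
      intro m
      calc c m ≤ Δ m := hcΔ m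
        _ ≤ 2 / lam * σ.π m := min_le_right _ _
        _ ≤ 2 / lam * (C * Gm g m) := mul_le_mul_of_nonneg_left (hCπ m) hlam'
        _ = 2 / lam * C * Gm g m := by ring
    obtain ⟨z, hzd, hzabs⟩ := surgery v c (ρ / 4) hc0 hcs hten
    have hzD : z ∈ Dset g π' := by
      intro m
      have h1 := hzabs m
      have h2 : Gm g m + π' m ≤ ‖v (m:ℝ)‖ + c m := by
        rcases le_or_gt (Gm g m + π' m) (‖v (m:ℝ)‖) with h | h
        · linarith [hc0 m]
        · have hceq : c m = Gm g m + π' m - ‖v (m:ℝ)‖ := by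
            rw [hc]
            exact max_eq_right (by linarith)
          linarith
      linarith
    have hπ'low : ∀ m, min (2 * Gm g m) 1 ≤ π' m :=
      fun m => (σ.hπlow m).trans (le_add_of_nonneg_right (hΔ0 m))
    have hπ'up : ∃ C', 0 ≤ C' ∧ ∀ m, π' m ≤ C' * Gm g m := by
      refine ⟨(1 + 2 / lam) * C, by positivity, fun m => ?_⟩
      have h1 : Δ m ≤ 2 / lam * σ.π m := min_le_right _ _
      have h2 := hCπ m
      have h3 : 2 / lam * σ.π m ≤ 2 / lam * (C * Gm g m) :=
        mul_le_mul_of_nonneg_left h2 hlam'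
      simp only [hπ']
      nlinarith
    refine ⟨⟨π', z, ρ / 32, by positivity, ?_, ?_, hπ'low, hπ'up, hzD⟩, ?_, ?_, ?_, ?_⟩
    · -- hr1
      have := σ.hr1
      linarith [σ.hr]
    · exact fun m => σ.hπ0 m |>.trans (le_add_of_nonneg_right (hΔ0 m)) |>.trans_eq rfl
    · exact fun m => le_add_of_nonneg_right (hΔ0 m)
    · calc dist z σ.xb ≤ dist z v + dist v σ.xb := dist_triangle _ _ _
        _ ≤ ρ / 4 + σ.r := add_le_add hzd hvdist.le
        _ ≤ 2 * σ.r := by linarith [σ.hr]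
    · show ρ / 32 ≤ σ.r / 4
      linarith [σ.hr]
    · exact Or.inl ⟨v, ρ, hρ0, hρr, hball, hzd, rfl⟩
  · -- DEFER branch
    push_neg at hcase
    set Δ : ℤ → ℝ := fun m => min (σ.r / 8) (2 / lam * σ.π m) with hΔ
    have hΔ0 : ∀ m, 0 ≤ Δ m :=
      fun m => le_min (by linarith [σ.hr]) (mul_nonneg hlam' (σ.hπ0 m))
    set π' : ℤ → ℝ := fun m => σ.π m + Δ m with hπ'
    set c : ℤ → ℝ := fun m => max 0 (Gm g m + π' m - ‖σ.xb (m:ℝ)‖) with hc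
    have hc0 : ∀ m, 0 ≤ c m := fun m => le_max_left _ _
    have hcΔ : ∀ m, c m ≤ Δ m := by
      intro m
      apply max_le (hΔ0 m)
      have hv := σ.hmem m
      simp only [hπ']
      linarith
    have hcs : ∀ m, c m ≤ σ.r / 8 := fun m => (hcΔ m).trans (min_le_left _ _)
    have hten : Tendsto c (cocompact ℤ) (𝓝 0) := by
      apply tendsto_of_le_Gm g c (2 / lam * C) hc0
      intro m
      calc c m ≤ Δ m := hcΔ m
        _ ≤ 2 / lam * σ.π m := min_le_right _ _
        _ ≤ 2 / lam * (C * Gm g m) := mul_le_mul_of_nonneg_left (hCπ m) hlam'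
        _ = 2 / lam * C * Gm g m := by ring
    obtain ⟨z, hzd, hzabs⟩ := surgery σ.xb c (σ.r / 8) hc0 hcs hten
    have hzD : z ∈ Dset g π' := by
      intro m
      have h1 := hzabs m
      have h2 : Gm g m + π' m ≤ ‖σ.xb (m:ℝ)‖ + c m := by
        rcases le_or_gt (Gm g m + π' m) (‖σ.xb (m:ℝ)‖) with h | h
        · linarith [hc0 m]
        · have hceq : c m = Gm g m + π' m - ‖σ.xb (m:ℝ)‖ := by
            rw [hc]
            exact max_eq_right (by linarith)
          linarith
      linarith
    have hπ'low : ∀ m, min (2 * Gm g m) 1 ≤ π' m :=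
      fun m => (σ.hπlow m).trans (le_add_of_nonneg_right (hΔ0 m))
    have hπ'up : ∃ C', 0 ≤ C' ∧ ∀ m, π' m ≤ C' * Gm g m := by
      refine ⟨(1 + 2 / lam) * C, by positivity, fun m => ?_⟩
      have h1 : Δ m ≤ 2 / lam * σ.π m := min_le_right _ _
      have h2 := hCπ m
      have h3 : 2 / lam * σ.π m ≤ 2 / lam * (C * Gm g m) :=
        mul_le_mul_of_nonneg_left h2 hlam'
      simp only [hπ']
      nlinarith
    have hr4 : 0 < σ.r / 4 := by linarith [σ.hr]
    refine ⟨⟨π', z, σ.r / 4, hr4, ?_, ?_, hπ'low, hπ'up, hzD⟩, ?_, ?_, ?_, ?_⟩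
    · have := σ.hr1; linarith
    · exact fun m => σ.hπ0 m |>.trans (le_add_of_nonneg_right (hΔ0 m)) |>.trans_eq rfl
    · exact fun m => le_add_of_nonneg_right (hΔ0 m)
    · calc dist z σ.xb ≤ σ.r / 8 := hzd
        _ ≤ 2 * σ.r := by linarith [σ.hr]
    · show σ.r / 4 ≤ σ.r / 4
      exact le_refl _
    · exact Or.inr ⟨hcase, fun m => le_refl _, hzd, rfl⟩

end Main

noncomputable section Rec

variable (g : C₀(ℝ, ℂ)) (lam : ℝ) (hlam0 : 0 < lam) (S : ℕ → Set C₀(ℝ, ℂ))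

noncomputable def states (σ₀ : St g) : ℕ → St g :=
  fun n => Nat.rec σ₀ (fun n σ => Classical.choose (exists_next g lam hlam0 (S n) σ)) n

lemma states_next (σ₀ : St g) (n : ℕ) :
    Next g lam (S n) (states g lam hlam0 S σ₀ n) (states g lam hlam0 S σ₀ (n + 1)) :=
  Classical.choose_spec (exists_next g lam hlam0 (S n) (states g lam hlam0 S σ₀ n))

variable (σ₀ : St g)

lemma states_r_le (n : ℕ) :
    (states g lam hlam0 S σ₀ (n + 1)).r ≤ (states g lam hlam0 S σ₀ n).r / 4 :=
  (states_next g lam hlam0 S σ₀ n).2.2.1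

lemma states_dist_le (n : ℕ) :
    dist (states g lam hlam0 S σ₀ (n + 1)).xb (states g lam hlam0 S σ₀ n).xb
      ≤ 2 * (states g lam hlam0 S σ₀ n).r :=
  (states_next g lam hlam0 S σ₀ n).2.1

lemma states_pi_mono (n j : ℕ) (h : n ≤ j) (m : ℤ) :
    (states g lam hlam0 S σ₀ n).π m ≤ (states g lam hlam0 S σ₀ j).π m := by
  induction j, h using Nat.le_induction with
  | base => exact le_refl _
  | succ j hnj ih => exact ih.trans ((states_next g lam hlam0 S σ₀ j).1 m)

lemma states_telescope (n j : ℕ) (h : n ≤ j) :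
    dist (states g lam hlam0 S σ₀ j).xb (states g lam hlam0 S σ₀ n).xb
      + 3 * (states g lam hlam0 S σ₀ j).r ≤ 3 * (states g lam hlam0 S σ₀ n).r := by
  induction j, h using Nat.le_induction with
  | base => simp
  | succ j hnj ih =>
      have h1 := states_dist_le g lam hlam0 S σ₀ j
      have h2 := states_r_le g lam hlam0 S σ₀ j
      have h3 := dist_triangle (states g lam hlam0 S σ₀ (j+1)).xb
        (states g lam hlam0 S σ₀ j).xb (states g lam hlam0 S σ₀ n).xb
      have h4 := (states g lam hlam0 S σ₀ j).hr
      linarith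

lemma states_r_decay (n : ℕ) :
    (states g lam hlam0 S σ₀ n).r ≤ (1/4 : ℝ) ^ n := by
  induction n with
  | zero => exact σ₀.hr1
  | succ n ih =>
      have h1 := states_r_le g lam hlam0 S σ₀ n
      calc (states g lam hlam0 S σ₀ (n+1)).r ≤ (states g lam hlam0 S σ₀ n).r / 4 := h1
        _ ≤ (1/4:ℝ)^n / 4 := by linarith
        _ = (1/4:ℝ)^(n+1) := by ring

lemma states_cauchy : CauchySeq (fun n => (states g lam hlam0 S σ₀ n).xb) := by
  apply cauchySeq_of_le_geometric (1/4 : ℝ) 2 (by norm_num)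
  intro n
  rw [dist_comm]
  calc dist (states g lam hlam0 S σ₀ (n+1)).xb (states g lam hlam0 S σ₀ n).xb
      ≤ 2 * (states g lam hlam0 S σ₀ n).r := states_dist_le g lam hlam0 S σ₀ n
    _ ≤ 2 * (1/4:ℝ)^n := by
        have := states_r_decay g lam hlam0 S σ₀ n; linarith

end Rec

section Limit

variable (g : C₀(ℝ, ℂ)) (lam : ℝ) (hlam0 : 0 < lam) (S : ℕ → Set C₀(ℝ, ℂ)) (σ₀ : St g)
variable (xlim : C₀(ℝ, ℂ))

lemma lim_dist (hxlim : Tendsto (fun n => (states g lam hlam0 S σ₀ n).xb) atTop (𝓝 xlim)) (n : ℕ) :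
    dist xlim (states g lam hlam0 S σ₀ n).xb ≤ 3 * (states g lam hlam0 S σ₀ n).r := by
  have ht : Tendsto (fun j => dist (states g lam hlam0 S σ₀ j).xb
      (states g lam hlam0 S σ₀ n).xb) atTop
      (𝓝 (dist xlim (states g lam hlam0 S σ₀ n).xb)) :=
    hxlim.dist tendsto_const_nhds
  apply le_of_tendsto ht
  filter_upwards [eventually_ge_atTop n] with j hj
  have h1 := states_telescope g lam hlam0 S σ₀ n j hj
  have h2 := (states g lam hlam0 S σ₀ j).hr
  linarith

lemma lim_mem (hxlim : Tendsto (fun n => (states g lam hlam0 S σ₀ n).xb) atTop (𝓝 xlim)) (n : ℕ) :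
    xlim ∈ Dset g (states g lam hlam0 S σ₀ n).π := by
  intro m
  have hdt : Tendsto (fun j => ‖xlim (m:ℝ)‖
      + dist (states g lam hlam0 S σ₀ j).xb xlim) atTop (𝓝 (‖xlim (m:ℝ)‖ + 0)) := by
    apply Tendsto.const_add
    exact tendsto_iff_dist_tendsto_zero.mp hxlim
  have key : Gm g m + (states g lam hlam0 S σ₀ n).π m ≤ ‖xlim (m:ℝ)‖ + 0 := by
    apply ge_of_tendsto hdt
    filter_upwards [eventually_ge_atTop n] with j hj
    have h1 : Gm g m + (states g lam hlam0 S σ₀ n).π m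
        ≤ Gm g m + (states g lam hlam0 S σ₀ j).π m := by
      have := states_pi_mono g lam hlam0 S σ₀ n j hj m; linarith
    have h2 := (states g lam hlam0 S σ₀ j).hmem m
    have h3 := abs_apply_le ((states g lam hlam0 S σ₀ j).xb) xlim m
    linarith
  linarith

end Limit



theorem Gamma_not_sigma_porous (lam : ℝ) (hlam0 : 0 < lam) (hlam : lam ≤ 1 / 2)
    (g : C₀(ℝ, ℂ)) :
    ¬ IsSigmaPorous lam
      {f : C₀(ℝ, ℂ) | ∀ m : ℤ, ‖g (m : ℝ)‖ ≤ ‖f (m : ℝ)‖} := by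
  rintro ⟨S, hS, hcov⟩
  -- initial state
  have h3g : ∀ m : ℤ, ‖((3:ℝ) • g) ((m:ℤ):ℝ)‖ = 3 * Gm g m := by
    intro m
    rw [ZeroAtInftyContinuousMap.smul_apply]
    rw [norm_smul]
    simp [Gm]
  have hπ0low : ∀ m : ℤ, (0:ℝ) ≤ min (2 * Gm g m) 1 :=
    fun m => le_min (mul_nonneg (by norm_num) (Gm_nonneg g m)) zero_le_one
  set σ₀ : St g := ⟨fun m => min (2 * Gm g m) 1, (3:ℝ) • g, 1, one_pos, le_refl 1,
    hπ0low, fun m => le_refl _, ⟨2, by norm_num, fun m => min_le_left _ _⟩,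
    by
      intro m
      rw [h3g m]
      have h1 : min (2 * Gm g m) 1 ≤ 2 * Gm g m := min_le_left _ _
      linarith⟩ with hσ₀
  obtain ⟨xlim, hxlim⟩ := cauchySeq_tendsto_of_complete (states_cauchy g lam hlam0 S σ₀)
  have hmemn : ∀ n, xlim ∈ Dset g (states g lam hlam0 S σ₀ n).π :=
    fun n => lim_mem g lam hlam0 S σ₀ xlim hxlim n
  have hdistn : ∀ n, dist xlim (states g lam hlam0 S σ₀ n).xb
      ≤ 3 * (states g lam hlam0 S σ₀ n).r :=
    fun n => lim_dist g lam hlam0 S σ₀ xlim hxlim n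
  have hxΓ : xlim ∈ {f : C₀(ℝ, ℂ) | ∀ m : ℤ, ‖g (m : ℝ)‖ ≤ ‖f (m : ℝ)‖} := by
    intro m
    have h1 := hmemn 0 m
    have h2 : (0:ℝ) ≤ (states g lam hlam0 S σ₀ 0).π m := (states g lam hlam0 S σ₀ 0).hπ0 m
    have h3 : Gm g m = ‖g (m:ℝ)‖ := rfl
    rw [← h3]
    linarith
  rw [hcov] at hxΓ
  obtain ⟨N, hxSN⟩ := Set.mem_iUnion.mp hxΓ
  -- case on the branch taken at stage N
  rcases (states_next g lam hlam0 S σ₀ N).2.2.2 with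
    ⟨v, ρ, hρ0, hρr, hball, hdistv, hreq⟩ | ⟨hdense, hinc, hdistd, hreqd⟩
  · -- kill branch: xlim lies in an S N-free ball
    have h1 : dist xlim v ≤ 3 * (states g lam hlam0 S σ₀ (N+1)).r + ρ/4 :=
      (dist_triangle xlim (states g lam hlam0 S σ₀ (N+1)).xb v).trans
        (add_le_add (hdistn (N+1)) hdistv)
    rw [hreq] at h1
    have h2 : xlim ∈ Metric.ball v ρ := by
      rw [Metric.mem_ball]
      linarith
    have h3 : xlim ∈ Metric.ball v ρ ∩ S N := ⟨h2, hxSN⟩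
    rw [hball] at h3
    exact h3
  · -- defer branch: contradict porosity at xlim
    set A := states g lam hlam0 S σ₀ N with hA
    set B := states g lam hlam0 S σ₀ (N+1) with hB
    have hδ : (0:ℝ) < A.r / 100 := by linarith [A.hr]
    obtain ⟨y, hy_ball, hy_ne, hhole⟩ := hS N xlim hxSN (A.r/100) hδ
    set d := dist xlim y with hd
    have hd0 : 0 < d := by
      rw [hd, dist_pos]
      exact fun h => hy_ne h.symm
    have hdδ : d < A.r/100 := by
      rw [hd, dist_comm]
      exact Metric.mem_ball.mp hy_ball
    have hd1 : d < 1 := by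
      have := A.hr1; linarith
    obtain ⟨CN, hCN0, hCNπ⟩ := A.hπup
    set c : ℤ → ℝ := fun m => max 0 (Gm g m + A.π m - ‖y (m:ℝ)‖) with hc
    have hc0 : ∀ m, 0 ≤ c m := fun m => le_max_left _ _
    have hbound : ∀ m, c m ≤ 3/4 * (lam * d) := by
      intro m
      rcases le_or_gt (lam * d / 2) (A.π m) with hcase | hcase
      · -- big coordinate: headroom kills the cost
        have key : Gm g m + A.π m ≤ ‖y (m:ℝ)‖ := by
          have e1 : ‖xlim (m:ℝ)‖ - dist xlim y ≤ ‖y (m:ℝ)‖ :=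
            abs_apply_le xlim y m
          have e2 : Gm g m + B.π m ≤ ‖xlim (m:ℝ)‖ := hmemn (N+1) m
          have e3 : A.π m + min (A.r/8) (2/lam * A.π m) ≤ B.π m := hinc m
          have e4 : d ≤ min (A.r/8) (2/lam * A.π m) := by
            apply le_min
            · linarith
            · have e5 : 2/lam * (lam * d / 2) ≤ 2/lam * A.π m :=
                mul_le_mul_of_nonneg_left hcase (by positivity)
              have e6 : 2/lam * (lam * d / 2) = d := by
                field_simp
              linarith
          linarith
        apply max_le (by positivity)
        have hpos : (0:ℝ) ≤ 3/4 * (lam * d) := by positivity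
        linarith
      · -- small coordinate
        have hlow := A.hπlow m
        have hld : lam * d / 2 < 1 := by nlinarith
        have hG : Gm g m < lam * d / 4 := by
          rcases le_or_gt (2 * Gm g m) 1 with h2 | h2
          · rw [min_eq_left h2] at hlow; linarith
          · rw [min_eq_right h2.le] at hlow; linarith
        apply max_le (by positivity)
        have hy0 : (0:ℝ) ≤ ‖y (m:ℝ)‖ := norm_nonneg _
        linarith
    have hten : Tendsto c (cocompact ℤ) (𝓝 0) := by
      apply tendsto_of_le_Gm g c (1 + CN) hc0
      intro m
      have h1 := hCNπ m
      have hy0 : (0:ℝ) ≤ ‖y (m:ℝ)‖ := norm_nonneg _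
      have hGm := Gm_nonneg g m
      apply max_le (by nlinarith)
      nlinarith
    obtain ⟨z, hzd, hzabs⟩ := surgery y c (3/4 * (lam * d)) hc0 hbound hten
    have hzD : z ∈ Dset g A.π := by
      intro m
      have h1 := hzabs m
      rcases le_or_gt (Gm g m + A.π m) (‖y (m:ℝ)‖) with h | h
      · linarith [hc0 m]
      · have hceq : c m = Gm g m + A.π m - ‖y (m:ℝ)‖ := by
          rw [hc]
          exact max_eq_right (by linarith)
        linarith
    have hzloc : dist z A.xb < A.r := by
      have t1 : dist z A.xb ≤ dist z y + dist y xlim + dist xlim A.xb := dist_triangle4 _ _ _ _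
      have t2 : dist y xlim = d := by rw [hd, dist_comm]
      have t3 : dist xlim A.xb ≤ 3 * B.r + A.r/8 :=
        (dist_triangle xlim B.xb A.xb).trans (add_le_add (hdistn (N+1)) hdistd)
      rw [hreqd] at t3
      have hr0 := A.hr
      nlinarith
    obtain ⟨s, hs_ball, hs_S⟩ := hdense z hzD hzloc (lam * d / 4) (by positivity)
      (by nlinarith [A.hr])
    have hmem1 : s ∈ Metric.ball y (lam * dist xlim y) := by
      rw [Metric.mem_ball]
      have u1 : dist s z < lam * d / 4 := Metric.mem_ball.mp hs_ball
      have u2 : dist s y ≤ dist s z + dist z y := dist_triangle _ _ _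
      rw [← hd]
      linarith
    have hmem2 : s ∈ Metric.ball y (lam * dist xlim y) ∩ S N := ⟨hmem1, hs_S⟩
    rw [hhole] at hmem2
    exact hmem2
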